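/- Let n₋, n₀, n₊ be natural numbers, B₊ a real n₀ × n₊ matrix, B₋ a real n₋ × n₀ matrix, and W₋, W₀, W₊ diagonal matrices of sizes n₋, n₀, n₊ with strictly positive diagonal entries, and let L = W₀⁻¹ B₊ W₊ B₊ᵀ + B₋ᵀ W₋⁻¹ B₋ W₀. Then the kernel of L is exactly the space of homological solutions: for z ∈ ℝ^{n₀}, L z = 0 if and only if B₊ᵀ z = 0 and B₋ W₀ z = 0. -/

import Mathlib

open Matrix BigOperators

/-- The kernel of the weighted combinatorial Laplacian
`L = W₀⁻¹B₊W₊B₊ᵀ + B₋ᵀW₋⁻¹B₋W₀` is exactly the space of homological solutions: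
`Lz = 0` if and only if `B₊ᵀz = 0` and `B₋W₀z = 0`. -/
theorem kernel_of_weighted_simplicial_laplacian
    (nm n0 np : ℕ)
    (Bp : Matrix (Fin n0) (Fin np) ℝ) (Bm : Matrix (Fin nm) (Fin n0) ℝ)
    (wm : Fin nm → ℝ) (w0 : Fin n0 → ℝ) (wp : Fin np → ℝ)
    (hwm : ∀ i, 0 < wm i) (hw0 : ∀ i, 0 < w0 i) (hwp : ∀ i, 0 < wp i) :
    ∀ z : Fin n0 → ℝ,
      ((Matrix.diagonal fun i => (w0 i)⁻¹) * Bp * Matrix.diagonal wp * Bp.transpose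
          + Bm.transpose * (Matrix.diagonal fun j => (wm j)⁻¹) * Bm
            * Matrix.diagonal w0).mulVec z = 0
        ↔ Bp.transpose.mulVec z = 0 ∧ Bm.mulVec ((Matrix.diagonal w0).mulVec z) = 0 := by
  intro z
  set x := Bp.transpose.mulVec z with hx
  set u := (Matrix.diagonal w0).mulVec z with hu
  set y := Bm.mulVec u with hy
  -- Expansion of the Laplacian applied to z
  have hexp :
      ((Matrix.diagonal fun i => (w0 i)⁻¹) * Bp * Matrix.diagonal wp * Bp.transpose
          + Bm.transpose * (Matrix.diagonal fun j => (wm j)⁻¹) * Bm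
            * Matrix.diagonal w0).mulVec z
        = (Matrix.diagonal fun i => (w0 i)⁻¹).mulVec
            (Bp.mulVec ((Matrix.diagonal wp).mulVec x))
          + Bm.transpose.mulVec
            ((Matrix.diagonal fun j => (wm j)⁻¹).mulVec y) := by
    rw [Matrix.add_mulVec]
    simp only [hx, hy, hu, Matrix.mulVec_mulVec]
    ring_nf
    simp [Matrix.mul_assoc]
  constructor
  · intro hL
    have hdot : u ⬝ᵥ (((Matrix.diagonal fun i => (w0 i)⁻¹) * Bp * Matrix.diagonal wp
        * Bp.transpose + Bm.transpose * (Matrix.diagonal fun j => (wm j)⁻¹) * Bm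
        * Matrix.diagonal w0).mulVec z) = 0 := by rw [hL]; simp
    rw [hexp, dotProduct_add] at hdot
    -- first term
    have h1 : u ⬝ᵥ (Matrix.diagonal fun i => (w0 i)⁻¹).mulVec
        (Bp.mulVec ((Matrix.diagonal wp).mulVec x))
        = ∑ k, wp k * x k ^ 2 := by
      have huz : ∀ v : Fin n0 → ℝ,
          u ⬝ᵥ (Matrix.diagonal fun i => (w0 i)⁻¹).mulVec v = z ⬝ᵥ v := by
        intro v
        simp only [hu, dotProduct, Matrix.mulVec_diagonal]
        refine Finset.sum_congr rfl fun i _ => ?_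
        have h0 : w0 i ≠ 0 := (hw0 i).ne'
        field_simp
      rw [huz, Matrix.dotProduct_mulVec, ← Matrix.mulVec_transpose, ← hx,
        dotProduct]
      refine Finset.sum_congr rfl fun k _ => ?_
      rw [Matrix.mulVec_diagonal]
      ring
    -- second term
    have h2 : u ⬝ᵥ Bm.transpose.mulVec
        ((Matrix.diagonal fun j => (wm j)⁻¹).mulVec y)
        = ∑ j, (wm j)⁻¹ * y j ^ 2 := by
      rw [Matrix.dotProduct_mulVec, ← Matrix.mulVec_transpose, Matrix.transpose_transpose,
        ← hy, dotProduct]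
      refine Finset.sum_congr rfl fun j _ => ?_
      rw [Matrix.mulVec_diagonal]
      ring
    rw [h1, h2] at hdot
    have hs1 : (0:ℝ) ≤ ∑ k, wp k * x k ^ 2 :=
      Finset.sum_nonneg fun k _ => mul_nonneg (hwp k).le (sq_nonneg _)
    have hs2 : (0:ℝ) ≤ ∑ j, (wm j)⁻¹ * y j ^ 2 :=
      Finset.sum_nonneg fun j _ => mul_nonneg (inv_nonneg.mpr (hwm j).le) (sq_nonneg _)
    have he1 : ∑ k, wp k * x k ^ 2 = 0 := by linarith
    have he2 : ∑ j, (wm j)⁻¹ * y j ^ 2 = 0 := by linarith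
    constructor
    · funext k
      have := (Finset.sum_eq_zero_iff_of_nonneg
        (fun k _ => mul_nonneg (hwp k).le (sq_nonneg (x k)))).mp he1 k (Finset.mem_univ k)
      have hxk : x k ^ 2 = 0 := by
        rcases mul_eq_zero.mp this with h | h
        · exact absurd h (hwp k).ne'
        · exact h
      simpa using pow_eq_zero_iff (n := 2) (by norm_num) |>.mp hxk
    · funext j
      have := (Finset.sum_eq_zero_iff_of_nonneg
        (fun j _ => mul_nonneg (inv_nonneg.mpr (hwm j).le) (sq_nonneg (y j)))).mp he2 j
        (Finset.mem_univ j)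
      have hyj : y j ^ 2 = 0 := by
        rcases mul_eq_zero.mp this with h | h
        · exact absurd h (inv_ne_zero (hwm j).ne')
        · exact h
      simpa using pow_eq_zero_iff (n := 2) (by norm_num) |>.mp hyj
  · rintro ⟨hx0, hy0⟩
    rw [hexp, hx0, hy0]
    simp
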